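/- Point-picking lemma: Let (X, d) be a complete metric space and A : X → [0, ∞) a continuous function that is bounded on bounded sets. Suppose x0 ∈ X satisfies A(x0) ≥ 1, and fix α > 0 with α/A(x0) ≤ 1/2. Then there exists p ∈ X with A(p) ≥ A(x0), d(p, x0) ≤ 1, and sup { A(q) : q ∈ X, d(q, p) ≤ α/A(p) } ≤ 2 A(p). -/
import Mathlib


/-- Point-picking lemma: in a complete metric space `X`, given a continuous function
`A : X → [0,∞)` bounded on bounded sets, a point `x0` with `A(x0) ≥ 1`, and `α > 0`
with `α / A(x0) ≤ 1/2`, there is a point `p` with `A(p) ≥ A(x0)`, `d(p, x0) ≤ 1` and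
`A ≤ 2 A(p)` on the closed ball of radius `α / A(p)` around `p`. -/
theorem point_picking (X : Type*) [MetricSpace X] [CompleteSpace X]
    (A : X → ℝ) (hcont : Continuous A) (hnonneg : ∀ x, 0 ≤ A x)
    (hbdd : ∀ s : Set X, Bornology.IsBounded s → BddAbove (A '' s))
    (x0 : X) (hA0 : 1 ≤ A x0) (α : ℝ) (hα : 0 < α) (hα2 : α / A x0 ≤ 1 / 2) :
    ∃ p : X, A x0 ≤ A p ∧ dist p x0 ≤ 1 ∧
      ∀ q : X, dist q p ≤ α / A p → A q ≤ 2 * A p := by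
  by_contra hcon
  push_neg at hcon
  have hA0pos : 0 < A x0 := lt_of_lt_of_le one_pos hA0
  have hα' : α ≤ (1 / 2) * A x0 := by
    rw [div_le_iff₀ hA0pos] at hα2; linarith
  have key : ∀ k : ℕ, ∃ p : X, 2 ^ k * A x0 ≤ A p ∧ dist p x0 ≤ 1 - (1 / 2 : ℝ) ^ k := by
    intro k
    induction k with
    | zero => exact ⟨x0, by simp, by simp⟩
    | succ k ih =>
      obtain ⟨p, hp1, hp2⟩ := ih
      have h2k : (1 : ℝ) ≤ 2 ^ k := one_le_pow₀ (by norm_num)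
      have hAp : A x0 ≤ A p := le_trans (by nlinarith) hp1
      have hApos : 0 < A p := lt_of_lt_of_le hA0pos hAp
      have hp2' : dist p x0 ≤ 1 := hp2.trans (by
        have : (0:ℝ) < (1/2)^k := by positivity
        linarith)
      obtain ⟨q, hq1, hq2⟩ := hcon p hAp hp2'
      refine ⟨q, ?_, ?_⟩
      · calc (2:ℝ) ^ (k+1) * A x0 = 2 * (2 ^ k * A x0) := by ring
          _ ≤ 2 * A p := by linarith
          _ ≤ A q := hq2.le
      · have hdiv : α / A p ≤ (1 / 2 : ℝ) ^ (k + 1) := by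
          rw [div_le_iff₀ hApos]
          have h2 : ((1:ℝ)/2) ^ k * 2 ^ k = 1 := by
            rw [← mul_pow]; norm_num
          have h1 : ((1:ℝ)/2) ^ (k+1) * (2 ^ k * A x0) = (1/2) * A x0 := by
            rw [pow_succ]
            calc ((1:ℝ)/2)^k * (1/2) * (2 ^ k * A x0)
                = ((1/2)^k * 2^k) * ((1/2) * A x0) := by ring
              _ = (1/2) * A x0 := by rw [h2, one_mul]
          calc α ≤ (1/2) * A x0 := hα'
            _ = (1/2)^(k+1) * (2 ^ k * A x0) := h1.symm
            _ ≤ (1/2)^(k+1) * A p := by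
                apply mul_le_mul_of_nonneg_left hp1 (by positivity)
        calc dist q x0 ≤ dist q p + dist p x0 := dist_triangle q p x0
          _ ≤ (1/2)^(k+1) + (1 - (1/2)^k) := add_le_add (hq1.trans hdiv) hp2
          _ = 1 - (1/2)^(k+1) := by rw [pow_succ]; ring
  obtain ⟨M, hM⟩ := hbdd (Metric.closedBall x0 1) Metric.isBounded_closedBall
  obtain ⟨k, hk⟩ := pow_unbounded_of_one_lt M (by norm_num : (1:ℝ) < 2)
  obtain ⟨p, hp1, hp2⟩ := key k
  have hpball : p ∈ Metric.closedBall x0 1 := by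
    rw [Metric.mem_closedBall]
    have : (0:ℝ) < (1/2)^k := by positivity
    linarith
  have hApM : A p ≤ M := hM ⟨p, hpball, rfl⟩
  have : (2:ℝ) ^ k ≤ A p := le_trans (by nlinarith [one_le_pow₀ (by norm_num : (1:ℝ) ≤ 2) (n := k)]) hp1
  linarith
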